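/- In the setting of the previous certainty-equivalent lemma, suppose additionally that for every m ∈ M and every neighborhood U of m in X there exist m̲, m̄ ∈ M with m ∈ [m̲, m̄] ⊆ U (and m̲ < m, m < m̄ when m is not extremal in M). Fix a continuous strictly increasing u : X → ℝ. Then the function u_≿(x) = u(m*(x)), where m*(x) ∈ M is the unique element with x ∼ m*(x), is a continuous utility representation of ≿: u_≿(x) ≥ u_≿(y) iff x ≿ y. -/

import Mathlib

open Filter Topology

/-- in the certainty-equivalent setting, with the additional local
order-interval condition on `M`, for any continuous strictly increasing
`u : X → ℝ`, the map `x ↦ u (m*(x))` (where `m*(x) ∈ M` is the unique element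
indifferent to `x`) is a continuous utility representation of `≿`. -/
theorem stmt_16 {X : Type*} [TopologicalSpace X] [PartialOrder X]
    (M : Set X) (hMconn : IsConnected M)
    (hMtot : ∀ x ∈ M, ∀ y ∈ M, x ≠ y → x < y ∨ y < x)
    (hMbounds : ∀ x : X, (∃ m ∈ M, m ≤ x) ∧ (∃ m ∈ M, x ≤ m))
    -- local order-interval condition on M
    (hMnbhd : ∀ m ∈ M, ∀ U ∈ nhds m, ∃ ml ∈ M, ∃ mu ∈ M,
      ml ≤ m ∧ m ≤ mu ∧ {z : X | ml ≤ z ∧ z ≤ mu} ⊆ U ∧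
      ((∃ m' ∈ M, m < m') → m < mu) ∧ ((∃ m' ∈ M, m' < m) → ml < m))
    (R : X → X → Prop)
    (hcl : IsClosed {p : X × X | R p.1 p.2})
    (hcomp : ∀ x y, R x y ∨ R y x)
    (htrans : ∀ x y z, R x y → R y z → R x z)
    (hmono : ∀ x y : X, x < y → R y x ∧ ¬ R x y)
    (u : X → ℝ) (hu : Continuous u) (humono : StrictMono u)
    -- m* selects the certainty equivalent
    (mstar : X → X) (hmstar : ∀ x, mstar x ∈ M ∧ R x (mstar x) ∧ R (mstar x) x) :
    Continuous (fun x => u (mstar x)) ∧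
      ∀ x y, u (mstar x) ≥ u (mstar y) ↔ R x y := by
  have hrefl : ∀ x, R x x := fun x => (hcomp x x).elim id id
  -- a ≤ b implies R b a (no need for membership in M)
  have hleR : ∀ a b : X, a ≤ b → R b a := by
    intro a b h
    rcases eq_or_lt_of_le h with rfl | h'
    · exact hrefl a
    · exact (hmono a b h').1
  -- on M, order and preference are linked
  have hle : ∀ a ∈ M, ∀ b ∈ M, (a ≤ b ↔ R b a) := by
    intro a ha b hb
    refine ⟨hleR a b, ?_⟩
    intro h
    by_contra hn
    have hne : a ≠ b := by rintro rfl; exact hn le_rfl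
    rcases hMtot a ha b hb hne with h' | h'
    · exact hn h'.le
    · exact (hmono b a h').2 h
  constructor
  · rw [continuous_iff_continuousAt]
    intro x₀
    rw [ContinuousAt, Metric.tendsto_nhds]
    intro ε hε
    obtain ⟨hmM, hx₀m, hmx₀⟩ := hmstar x₀
    set m := mstar x₀ with hm
    have hU : {z : X | dist (u z) (u m) < ε} ∈ nhds m := by
      have := (hu.continuousAt (x := m)) (Metric.ball_mem_nhds (u m) hε)
      exact this
    obtain ⟨ml, hmlM, mu, hmuM, hml_le, hle_mu, hsub, hmu_strict, hml_strict⟩ :=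
      hMnbhd m hmM _ hU
    have claim_u : {x : X | R mu x} ∈ nhds x₀ := by
      by_cases hmax : ∃ m' ∈ M, m < m'
      · have hlt : m < mu := hmu_strict hmax
        have hopen : IsOpen {x : X | ¬ R x mu} := by
          have hc : IsClosed {x : X | R x mu} :=
            hcl.preimage (continuous_id.prodMk continuous_const)
          simpa [Set.compl_setOf] using hc.isOpen_compl
        have hx₀ : x₀ ∈ {x : X | ¬ R x mu} := by
          intro hxmu
          exact (hmono m mu hlt).2 (htrans m x₀ mu hmx₀ hxmu)
        refine Filter.mem_of_superset (hopen.mem_nhds hx₀) ?_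
        intro x hx
        exact (hcomp x mu).resolve_left hx
      · -- m is maximal in M, so mu is R-above everything
        refine Filter.mem_of_superset Filter.univ_mem ?_
        intro x _
        obtain ⟨mb, hmbM, hxmb⟩ := (hMbounds x).2
        have hmb_le : mb ≤ m := by
          rcases eq_or_ne mb m with rfl | hne
          · exact le_rfl
          · rcases hMtot mb hmbM m hmM hne with h' | h'
            · exact h'.le
            · exact absurd ⟨mb, hmbM, h'⟩ hmax
        exact htrans mu m x (hleR m mu hle_mu)
          (htrans m mb x (hleR mb m hmb_le) (hleR x mb hxmb))
    have claim_l : {x : X | R x ml} ∈ nhds x₀ := by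
      by_cases hmin : ∃ m' ∈ M, m' < m
      · have hlt : ml < m := hml_strict hmin
        have hopen : IsOpen {x : X | ¬ R ml x} := by
          have hc : IsClosed {x : X | R ml x} :=
            hcl.preimage (continuous_const.prodMk continuous_id)
          simpa [Set.compl_setOf] using hc.isOpen_compl
        have hx₀ : x₀ ∈ {x : X | ¬ R ml x} := by
          intro hmlx
          exact (hmono ml m hlt).2 (htrans ml x₀ m hmlx hx₀m)
        refine Filter.mem_of_superset (hopen.mem_nhds hx₀) ?_
        intro x hx
        exact (hcomp ml x).resolve_left hx
      · refine Filter.mem_of_superset Filter.univ_mem ?_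
        intro x _
        obtain ⟨mb, hmbM, hmbx⟩ := (hMbounds x).1
        have hm_le : m ≤ mb := by
          rcases eq_or_ne mb m with rfl | hne
          · exact le_rfl
          · rcases hMtot mb hmbM m hmM hne with h' | h'
            · exact absurd ⟨mb, hmbM, h'⟩ hmin
            · exact h'.le
        exact htrans x mb ml (hleR mb x hmbx)
          (htrans mb m ml (hleR m mb hm_le) (hleR ml m hml_le))
    filter_upwards [claim_u, claim_l] with x hxu hxl
    obtain ⟨hxM, hxmx, hmxx⟩ := hmstar x
    have h1 : ml ≤ mstar x :=
      (hle ml hmlM (mstar x) hxM).mpr (htrans (mstar x) x ml hmxx hxl)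
    have h2 : mstar x ≤ mu :=
      (hle (mstar x) hxM mu hmuM).mpr (htrans mu x (mstar x) hxu hxmx)
    exact hsub ⟨h1, h2⟩
  · intro x y
    obtain ⟨hxM, hxmx, hmxx⟩ := hmstar x
    obtain ⟨hyM, hymy, hmyy⟩ := hmstar y
    constructor
    · intro h
      have hle' : mstar y ≤ mstar x := by
        by_contra hn
        have hne : mstar x ≠ mstar y := by rintro he; exact hn he.ge
        rcases hMtot _ hxM _ hyM hne with h' | h'
        · exact absurd (humono h') (not_lt.mpr h)
        · exact hn h'.le
      have : R (mstar x) (mstar y) := (hle _ hyM _ hxM).mp hle'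
      exact htrans x (mstar x) y hxmx (htrans (mstar x) (mstar y) y this hmyy)
    · intro h
      have : R (mstar x) (mstar y) :=
        htrans (mstar x) x (mstar y) hmxx (htrans x y (mstar y) h hymy)
      exact humono.monotone ((hle _ hyM _ hxM).mpr this)
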